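/- arXiv:math/9812058 — 3 statements merged into one kernel-verified Lean document; each statement's English description precedes it below -/
import Mathlib

section
/- Let R be an integral domain of characteristic zero, and let (f_{ij}) be a g×g matrix with entries in R[[t]] that is invertible over R[[t]]. Then there exists a unique collection of power series φ_1,…,φ_g ∈ t·R[[t]] such that for each i, ∑_{j=1}^g f_{ij}(φ_j(t))·φ_j'(t) equals 1 if i = 1 and equals 0 otherwise. -/
open PowerSeries Finset in
/-- Composition `f(g)` of formal power series, valid when `g` has zero constant term. -/
noncomputable def psComp {R : Type*} [CommRing R] (f g : PowerSeries R) : PowerSeries R :=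
  PowerSeries.mk fun n => ∑ m ∈ Finset.range (n + 1),
    PowerSeries.coeff m f * PowerSeries.coeff n (g ^ m)

namespace CurvesAux

open PowerSeries Finset

variable {R : Type*} [CommRing R]

lemma coeff_psComp (f φ : PowerSeries R) (n : ℕ) :
    PowerSeries.coeff n (psComp f φ)
      = ∑ m ∈ Finset.range (n + 1), coeff m f * coeff n (φ ^ m) :=
  coeff_mk _ _

lemma coeff_zero_psComp (f φ : PowerSeries R) :
    coeff 0 (psComp f φ) = constantCoeff f := by
  simp [coeff_psComp, coeff_zero_eq_constantCoeff]

lemma agree_pow {φ ψ : PowerSeries R} {n : ℕ}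
    (h : ∀ k ≤ n, coeff k φ = coeff k ψ) (m : ℕ) :
    ∀ k ≤ n, coeff k (φ ^ m) = coeff k (ψ ^ m) := by
  induction m with
  | zero => intro k hk; rw [pow_zero, pow_zero]
  | succ m ih =>
    intro k hk
    rw [pow_succ, pow_succ, coeff_mul, coeff_mul]
    refine Finset.sum_congr rfl fun p hp => ?_
    rw [Finset.HasAntidiagonal.mem_antidiagonal] at hp
    rw [ih p.1 (by omega), h p.2 (by omega)]

lemma agree_psComp (f : PowerSeries R) {φ ψ : PowerSeries R} {n : ℕ}
    (h : ∀ k ≤ n, coeff k φ = coeff k ψ) :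
    ∀ k ≤ n, coeff k (psComp f φ) = coeff k (psComp f ψ) := by
  intro k hk
  rw [coeff_psComp, coeff_psComp]
  exact Finset.sum_congr rfl fun m _ => by rw [agree_pow h m k hk]

lemma coeff_derivativeFun' (f : PowerSeries R) (n : ℕ) :
    coeff n f.derivativeFun = coeff (n + 1) f * (n + 1) :=
  coeff_derivative f n

lemma key1 (f : PowerSeries R) {φ ψ : PowerSeries R} {n : ℕ}
    (h : ∀ k ≤ n, coeff k φ = coeff k ψ) :
    coeff n (psComp f φ * φ.derivativeFun) - coeff n (psComp f ψ * ψ.derivativeFun)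
      = ((n : R) + 1) * (constantCoeff f * (coeff (n+1) φ - coeff (n+1) ψ)) := by
  have hmem : ((0 : ℕ), n) ∈ Finset.HasAntidiagonal.antidiagonal n := by simp
  rw [coeff_mul, coeff_mul, ← Finset.add_sum_erase _ _ hmem, ← Finset.add_sum_erase _ _ hmem]
  have hS : ∑ p ∈ (Finset.HasAntidiagonal.antidiagonal n).erase (0, n),
      coeff p.1 (psComp f φ) * coeff p.2 φ.derivativeFun
      = ∑ p ∈ (Finset.HasAntidiagonal.antidiagonal n).erase (0, n),
      coeff p.1 (psComp f ψ) * coeff p.2 ψ.derivativeFun := by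
    refine Finset.sum_congr rfl fun p hp => ?_
    have hpa := Finset.HasAntidiagonal.mem_antidiagonal.mp (Finset.mem_of_mem_erase hp)
    have hpne := Finset.ne_of_mem_erase hp
    have hp1 : 1 ≤ p.1 := by
      rcases Nat.eq_zero_or_pos p.1 with h0 | h0
      · exact absurd (Prod.ext h0 (by omega)) hpne
      · exact h0
    rw [coeff_derivativeFun', coeff_derivativeFun',
      agree_psComp f h p.1 (by omega), h (p.2 + 1) (by omega)]
  rw [hS, coeff_derivativeFun', coeff_derivativeFun', coeff_zero_psComp, coeff_zero_psComp]
  push_cast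
  ring

lemma key {g : ℕ} (f : Matrix (Fin g) (Fin g) (PowerSeries R))
    {φ ψ : Fin g → PowerSeries R} {n : ℕ}
    (h : ∀ j, ∀ k ≤ n, coeff k (φ j) = coeff k (ψ j)) (i : Fin g) :
    coeff n (∑ j, psComp (f i j) (φ j) * (φ j).derivativeFun)
      - coeff n (∑ j, psComp (f i j) (ψ j) * (ψ j).derivativeFun)
      = ((n : R) + 1) * ∑ j, constantCoeff (f i j) *
          (coeff (n+1) (φ j) - coeff (n+1) (ψ j)) := by
  rw [map_sum, map_sum, ← Finset.sum_sub_distrib, Finset.mul_sum]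
  exact Finset.sum_congr rfl fun j _ => key1 (f i j) (h j)

noncomputable def sseq {R : Type*} [CommRing R] [Algebra ℚ R] {g : ℕ}
    (f : Matrix (Fin g) (Fin g) (PowerSeries R)) : ℕ → Fin g → PowerSeries R
  | 0 => 0
  | n + 1 => fun j =>
      sseq f n j + (PowerSeries.monomial (n + 1))
        (algebraMap ℚ R (((n : ℚ) + 1)⁻¹) *
          (((f.map ⇑(PowerSeries.constantCoeff (R := R)))⁻¹.mulVec fun i =>
            (if (i : ℕ) = 0 ∧ n = 0 then 1 else 0) -
              PowerSeries.coeff n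
                (∑ j, psComp (f i j) (sseq f n j) * (sseq f n j).derivativeFun)) j))

variable [Algebra ℚ R] {g : ℕ} (f : Matrix (Fin g) (Fin g) (PowerSeries R))

lemma coeff_sseq_of_gt : ∀ n k, n < k → ∀ j, coeff k (sseq f n j) = 0 := by
  intro n
  induction n with
  | zero => intro k hk j; simp [CurvesAux.sseq]
  | succ n ih =>
    intro k hk j
    simp only [sseq, map_add, coeff_monomial]
    rw [ih k (by omega) j, if_neg (by omega)]
    simp

lemma coeff_sseq_succ_le (n k : ℕ) (hk : k ≤ n) (j : Fin g) :
    coeff k (sseq f (n + 1) j) = coeff k (sseq f n j) := by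
  simp only [sseq, map_add, coeff_monomial]
  rw [if_neg (by omega)]
  simp

lemma coeff_sseq_stable (k n m : ℕ) (hk : k ≤ n) (h : n ≤ m) (j : Fin g) :
    coeff k (sseq f m j) = coeff k (sseq f n j) := by
  induction m with
  | zero => have : n = 0 := by omega
            subst this; rfl
  | succ m ih =>
    rcases Nat.lt_or_ge n (m + 1) with h1 | h1
    · rw [coeff_sseq_succ_le f m k (by omega) j, ih (by omega)]
    · have : n = m + 1 := by omega
      subst this; rfl

end CurvesAux

open PowerSeries in
/-- Lemma `curves`: over an integral domain `R` of characteristic zero, for an invertible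
`g × g` matrix `f` over `R[[t]]` there is a unique collection `φ_1, …, φ_g ∈ t·R[[t]]`
with `∑_j f_{ij}(φ_j) · φ_j' = δ_{i1}`. -/
theorem stmt_0 {R : Type*} [CommRing R] [IsDomain R] [Algebra ℚ R] (g : ℕ)
    (f : Matrix (Fin g) (Fin g) (PowerSeries R)) (hf : IsUnit f) :
    ∃! φ : Fin g → PowerSeries R,
      (∀ j, PowerSeries.constantCoeff (φ j) = 0) ∧
      ∀ i, ∑ j, psComp (f i j) (φ j) * (φ j).derivativeFun
        = if (i : ℕ) = 0 then 1 else 0 := by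
  classical
  have hCZ : CharZero R := charZero_of_injective_algebraMap (algebraMap ℚ R).injective
  set A : Matrix (Fin g) (Fin g) R := f.map ⇑(constantCoeff (R := R)) with hAdef
  have hA : IsUnit A := by
    have := hf.map ((constantCoeff (R := R)).mapMatrix (m := Fin g))
    simpa [RingHom.mapMatrix_apply] using this
  have hAdet : IsUnit A.det := (Matrix.isUnit_iff_isUnit_det A).mp hA
  set φ : Fin g → PowerSeries R := fun j => PowerSeries.mk fun k => coeff k (CurvesAux.sseq f k j)
    with hφdef
  have hcoeffφ : ∀ k n (j : Fin g), k ≤ n → coeff k (φ j) = coeff k (CurvesAux.sseq f n j) := by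
    intro k n j hkn
    rw [hφdef]
    simp only [coeff_mk]
    exact (CurvesAux.coeff_sseq_stable f k k n le_rfl hkn j).symm
  -- the coefficient of the inserted monomial
  have hstep : ∀ n (i : Fin g),
      coeff n (∑ j, psComp (f i j) (CurvesAux.sseq f (n+1) j) * (CurvesAux.sseq f (n+1) j).derivativeFun)
        = (if (i : ℕ) = 0 ∧ n = 0 then 1 else 0) := by
    intro n i
    have hagree : ∀ j, ∀ k ≤ n, coeff k (CurvesAux.sseq f (n+1) j) = coeff k (CurvesAux.sseq f n j) :=
      fun j k hk => CurvesAux.coeff_sseq_succ_le f n k hk j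
    have hk := CurvesAux.key f hagree i
    set u : Fin g → R := fun i => (if (i : ℕ) = 0 ∧ n = 0 then 1 else 0) -
        coeff n (∑ j, psComp (f i j) (CurvesAux.sseq f n j) * (CurvesAux.sseq f n j).derivativeFun) with hu
    have hc : ∀ j, coeff (n+1) (CurvesAux.sseq f (n+1) j) - coeff (n+1) (CurvesAux.sseq f n j)
        = algebraMap ℚ R (((n : ℚ) + 1)⁻¹) * (A⁻¹.mulVec u j) := by
      intro j
      have h1 : coeff (n+1) (CurvesAux.sseq f n j) = 0 :=
        CurvesAux.coeff_sseq_of_gt f n (n+1) (by omega) j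
      rw [h1, sub_zero]
      simp only [CurvesAux.sseq, map_add, PowerSeries.coeff_monomial, if_pos rfl, h1, zero_add]
      rfl
    have hsum : ∑ j, constantCoeff (f i j) *
        (coeff (n+1) (CurvesAux.sseq f (n+1) j) - coeff (n+1) (CurvesAux.sseq f n j))
        = algebraMap ℚ R (((n : ℚ) + 1)⁻¹) * u i := by
      have : ∀ j, constantCoeff (f i j) *
          (coeff (n+1) (CurvesAux.sseq f (n+1) j) - coeff (n+1) (CurvesAux.sseq f n j))
          = algebraMap ℚ R (((n : ℚ) + 1)⁻¹) * (A i j * A⁻¹.mulVec u j) := by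
        intro j; rw [hc j]; simp only [hAdef, Matrix.map_apply]; ring
      rw [Finset.sum_congr rfl fun j _ => this j, ← Finset.mul_sum]
      congr 1
      have : ∑ j, A i j * A⁻¹.mulVec u j = A.mulVec (A⁻¹.mulVec u) i := by
        simp [Matrix.mulVec, dotProduct]
      rw [this, Matrix.mulVec_mulVec, Matrix.mul_nonsing_inv A hAdet, Matrix.one_mulVec]
    have hone : ((n : R) + 1) * algebraMap ℚ R (((n : ℚ) + 1)⁻¹) = 1 := by
      have h1 : ((n : R) + 1) = algebraMap ℚ R ((n : ℚ) + 1) := by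
        rw [map_add, map_natCast, map_one]
      rw [h1, ← map_mul, mul_inv_cancel₀ (by positivity), map_one]
    rw [hsum, ← mul_assoc, hone, one_mul] at hk
    have hui : u i = (if (i : ℕ) = 0 ∧ n = 0 then 1 else 0) -
        coeff n (∑ j, psComp (f i j) (CurvesAux.sseq f n j) * (CurvesAux.sseq f n j).derivativeFun) := rfl
    rw [hui] at hk
    exact sub_left_inj.mp hk
  have hEφ : ∀ n (i : Fin g),
      coeff n (∑ j, psComp (f i j) (φ j) * (φ j).derivativeFun)
        = (if (i : ℕ) = 0 ∧ n = 0 then 1 else 0) := by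
    intro n i
    have hagree : ∀ j, ∀ k ≤ n, coeff k (φ j) = coeff k (CurvesAux.sseq f (n+1) j) :=
      fun j k hk => hcoeffφ k (n+1) j (by omega)
    have hk := CurvesAux.key f hagree i
    have htop : ∀ j, coeff (n+1) (φ j) = coeff (n+1) (CurvesAux.sseq f (n+1) j) :=
      fun j => hcoeffφ (n+1) (n+1) j le_rfl
    simp only [htop, sub_self, mul_zero, Finset.sum_const_zero] at hk
    rw [sub_eq_zero] at hk
    rw [hk, hstep n i]
  have hφ0 : ∀ j, constantCoeff (φ j) = 0 := by
    intro j
    rw [← coeff_zero_eq_constantCoeff_apply, hcoeffφ 0 0 j le_rfl]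
    simp [CurvesAux.sseq]
  have hφE : ∀ i, ∑ j, psComp (f i j) (φ j) * (φ j).derivativeFun
      = if (i : ℕ) = 0 then 1 else 0 := by
    intro i
    ext n
    rw [hEφ n i]
    by_cases hi : (i : ℕ) = 0 <;> by_cases hn : n = 0 <;>
      simp [hi, hn, PowerSeries.coeff_one]
  refine ⟨φ, ⟨hφ0, hφE⟩, ?_⟩
  rintro ψ ⟨hψ0, hψE⟩
  have hcoeff : ∀ k (j : Fin g), coeff k (ψ j) = coeff k (φ j) := by
    intro k
    induction k using Nat.strong_induction_on with
    | _ k IH =>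
      match k with
      | 0 =>
        intro j
        rw [coeff_zero_eq_constantCoeff_apply, coeff_zero_eq_constantCoeff_apply,
          hψ0 j, hφ0 j]
      | n + 1 =>
        intro j
        have hagree : ∀ j, ∀ m ≤ n, coeff m (ψ j) = coeff m (φ j) :=
          fun j m hm => IH m (by omega) j
        set d : Fin g → R := fun j => coeff (n+1) (ψ j) - coeff (n+1) (φ j) with hd
        have hz : ∀ i : Fin g, ((n : R) + 1) * ∑ j, constantCoeff (f i j) * d j = 0 := by
          intro i
          have hk := CurvesAux.key f hagree i
          rw [hψE i, hφE i, sub_self] at hk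
          exact hk.symm
        have hne : ((n : R) + 1) ≠ 0 := by
          have : ((n + 1 : ℕ) : R) ≠ 0 := Nat.cast_ne_zero.mpr (Nat.succ_ne_zero n)
          push_cast at this; exact this
        have hvz : A.mulVec d = 0 := by
          funext i
          have h2 := (mul_eq_zero.mp (hz i)).resolve_left hne
          simpa [Matrix.mulVec, dotProduct, hAdef, Matrix.map_apply] using h2
        have hdz : d = 0 := by
          have h3 := congrArg (fun v => A⁻¹.mulVec v) hvz
          simpa [Matrix.mulVec_mulVec, Matrix.nonsing_inv_mul A hAdet, Matrix.one_mulVec,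
            Matrix.mulVec_zero] using h3
        have := congrFun hdz j
        simp only [hd, Pi.zero_apply, sub_eq_zero] at this
        exact this
  funext j
  ext k
  exact hcoeff k j
end

section
/- Let k be a field of characteristic zero and let (f_{ij}) be a g×g matrix with entries in k[[t]] whose constant-term matrix (f_{ij}(0)) is invertible. Then there exist power series φ_1,…,φ_g ∈ t·k[[t]] with φ_1'(0) determined and, in particular with the property that ∑_j f_{1j}(φ_j)·φ_j' = 1 and ∑_j f_{ij}(φ_j)·φ_j' = 0 for i ≥ 2; moreover the linear coefficients (φ_1'(0),…,φ_g'(0)) equal the first column of the inverse of the matrix (f_{ij}(0)). -/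
section Aux

open PowerSeries Finset

variable {k : Type*} [Field k]

/-- Coefficients of powers depend only on low coefficients. -/
lemma pow_coeff_congr {A : ℕ} {ψ ψ' : PowerSeries k}
    (h : ∀ m ≤ A, coeff m ψ = coeff m ψ') :
    ∀ m, ∀ B ≤ A, coeff B (ψ ^ m) = coeff B (ψ' ^ m) := by
  intro m
  induction m with
  | zero => intro B _; simp
  | succ m ih =>
    intro B hB
    rw [pow_succ, pow_succ, coeff_mul, coeff_mul]
    refine Finset.sum_congr rfl fun p hp => ?_
    rw [HasAntidiagonal.mem_antidiagonal] at hp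
    rw [ih p.1 (le_trans (by omega) hB), h p.2 (le_trans (by omega) hB)]

lemma psComp_coeff_congr {A : ℕ} {F ψ ψ' : PowerSeries k}
    (h : ∀ m ≤ A, coeff m ψ = coeff m ψ') {B : ℕ} (hB : B ≤ A) :
    coeff B (psComp F ψ) = coeff B (psComp F ψ') := by
  simp only [psComp, coeff_mk]
  exact Finset.sum_congr rfl fun m _ => by rw [pow_coeff_congr h m B hB]

lemma coeff_zero_psComp (F ψ : PowerSeries k) :
    coeff 0 (psComp F ψ) = constantCoeff F := by
  simp [psComp]

lemma coeff_derivativeFun' (F : PowerSeries k) (n : ℕ) :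
    coeff n F.derivativeFun = coeff (n + 1) F * (n + 1) :=
  coeff_derivative F n

variable (g : ℕ) (f : Matrix (Fin g) (Fin g) (PowerSeries k))

/-- The "remainder" part of `coeff n (∑ j, f i j (χ j) * (χ j)')`. -/
noncomputable def Rm (i : Fin g) (n : ℕ) (χ : Fin g → PowerSeries k) : k :=
  ∑ a ∈ Finset.range n, ∑ j,
    coeff (a + 1) (psComp (f i j) (χ j)) * coeff (n - (a + 1)) ((χ j).derivativeFun)

lemma Rm_congr {i : Fin g} {n : ℕ} {χ χ' : Fin g → PowerSeries k}
    (h : ∀ j, ∀ m ≤ n, coeff m (χ j) = coeff m (χ' j)) :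
    Rm g f i n χ = Rm g f i n χ' := by
  unfold Rm
  refine Finset.sum_congr rfl fun a ha => Finset.sum_congr rfl fun j _ => ?_
  rw [Finset.mem_range] at ha
  rw [psComp_coeff_congr (h j) (by omega), coeff_derivativeFun', coeff_derivativeFun',
    h j (n - (a + 1) + 1) (by omega)]

/-- Splitting off the top coefficient. -/
lemma coeff_split (n : ℕ) (χ : Fin g → PowerSeries k) (i : Fin g) :
    coeff n (∑ j, psComp (f i j) (χ j) * (χ j).derivativeFun)
      = (∑ j, constantCoeff (f i j) * coeff n ((χ j).derivativeFun)) + Rm g f i n χ := by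
  rw [map_sum]
  have key : ∀ j : Fin g, coeff n (psComp (f i j) (χ j) * (χ j).derivativeFun)
      = constantCoeff (f i j) * coeff n ((χ j).derivativeFun)
        + ∑ a ∈ Finset.range n,
            coeff (a + 1) (psComp (f i j) (χ j))
              * coeff (n - (a + 1)) ((χ j).derivativeFun) := by
    intro j
    rw [coeff_mul, Finset.Nat.sum_antidiagonal_eq_sum_range_succ_mk, Finset.sum_range_succ']
    simp only [Nat.sub_zero, coeff_zero_psComp]
    ring
  rw [Finset.sum_congr rfl fun j _ => key j, Finset.sum_add_distrib, Rm, Finset.sum_comm]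

/-- The recursively defined coefficients. -/
noncomputable def cfun (N : Matrix (Fin g) (Fin g) k) : ℕ → Fin g → k
  | 0 => 0
  | (n + 1) => fun jj => ((n : k) + 1)⁻¹ * ∑ i, N jj i *
      ((if (i : ℕ) = 0 ∧ n = 0 then (1 : k) else 0) -
        Rm g f i n (fun j => PowerSeries.mk fun m =>
          if h : m ≤ n then cfun N m j else 0))
  decreasing_by omega

end Aux

open PowerSeries Finset in
/-- Over a field `k` of characteristic zero, given a `g × g` matrix over `k[[t]]` with
invertible constant-term matrix `M₀ = (f_{ij}(0))`, there exist `φ_1, …, φ_g ∈ t·k[[t]]`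
solving `∑_j f_{ij}(φ_j)·φ_j' = δ_{i1}`, and whose linear coefficients `(φ_j)'(0)` form
the first column of `M₀⁻¹`. -/
theorem stmt_5 {k : Type*} [Field k] [CharZero k] (g : ℕ) (hg : 0 < g)
    (f : Matrix (Fin g) (Fin g) (PowerSeries k))
    (hf0 : IsUnit (f.map (PowerSeries.constantCoeff))) :
    ∃ φ : Fin g → PowerSeries k,
      (∀ j, PowerSeries.constantCoeff (φ j) = 0) ∧
      (∀ i, ∑ j, psComp (f i j) (φ j) * (φ j).derivativeFun
        = if (i : ℕ) = 0 then 1 else 0) ∧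
      ∀ j, PowerSeries.coeff 1 (φ j) = (f.map (PowerSeries.constantCoeff))⁻¹ j ⟨0, hg⟩ := by
  set M : Matrix (Fin g) (Fin g) k := f.map (PowerSeries.constantCoeff) with hM
  set N : Matrix (Fin g) (Fin g) k := M⁻¹ with hN
  have hdet : IsUnit M.det := (Matrix.isUnit_iff_isUnit_det M).mp hf0
  have hMN : M * N = 1 := Matrix.mul_nonsing_inv M hdet
  set c : ℕ → Fin g → k := cfun g f N with hc
  set φ : Fin g → PowerSeries k := fun j => PowerSeries.mk fun m => c m j with hφ
  have hcoeff : ∀ j m, coeff m (φ j) = c m j := fun j m => coeff_mk m _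
  -- the truncated series used in the recursion agrees with φ up to n
  have htrunc : ∀ n i, Rm g f i n (fun j => PowerSeries.mk fun m =>
      if h : m ≤ n then cfun g f N m j else 0) = Rm g f i n φ := by
    intro n i
    refine Rm_congr g f fun j m hm => ?_
    simp [hφ, ← hc, hm]
  -- the defining equation of c (n+1)
  have hkey : ∀ n i, ∑ j, M i j * (c (n + 1) j * ((n : k) + 1))
      = (if (i : ℕ) = 0 ∧ n = 0 then (1 : k) else 0) - Rm g f i n φ := by
    intro n i
    have hne : ((n : k) + 1) ≠ 0 := Nat.cast_add_one_ne_zero n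
    have hdef : ∀ j, c (n + 1) j * ((n : k) + 1)
        = ∑ i', N j i' * ((if (i' : ℕ) = 0 ∧ n = 0 then (1 : k) else 0) - Rm g f i' n φ) := by
      intro j
      rw [hc, cfun]
      simp only [htrunc]
      rw [mul_comm, ← mul_assoc, mul_inv_cancel₀ hne, one_mul]
    simp_rw [hdef, Finset.mul_sum]
    rw [Finset.sum_comm]
    have : ∀ i' : Fin g, ∑ j, M i j * (N j i' *
        ((if (i' : ℕ) = 0 ∧ n = 0 then (1 : k) else 0) - Rm g f i' n φ))
        = (if i = i' then (1:k) else 0) *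
            ((if (i' : ℕ) = 0 ∧ n = 0 then (1 : k) else 0) - Rm g f i' n φ) := by
      intro i'
      simp_rw [← mul_assoc, ← Finset.sum_mul]
      congr 1
      have := congrArg (fun A => A i i') hMN
      simpa [Matrix.mul_apply, Matrix.one_apply] using this
    simp_rw [this, ite_mul, one_mul, zero_mul]
    rw [Finset.sum_ite_eq]
    simp
  refine ⟨φ, fun j => ?_, fun i => ?_, fun j => ?_⟩
  · rw [← PowerSeries.coeff_zero_eq_constantCoeff_apply, hcoeff, hc, cfun]
    rfl
  · ext n
    rw [coeff_split]
    have h1 : ∀ j : Fin g, constantCoeff (f i j) * coeff n ((φ j).derivativeFun)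
        = M i j * (c (n + 1) j * ((n : k) + 1)) := by
      intro j
      rw [coeff_derivativeFun', hcoeff]
      push_cast
      rw [hM]
      simp [Matrix.map_apply]
    rw [Finset.sum_congr rfl fun j _ => h1 j, hkey, sub_add_cancel]
    by_cases hi : (i : ℕ) = 0 <;> by_cases hn : n = 0 <;>
      simp [hi, hn, coeff_one]
  · rw [hcoeff, hc]
    show cfun g f N (0 + 1) j = _
    rw [cfun]
    have hRm0 : ∀ i : Fin g, Rm g f i 0 (fun j => PowerSeries.mk fun m =>
        if h : m ≤ 0 then cfun g f N m j else 0) = 0 := by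
      intro i; simp [Rm]
    simp only [hRm0, Nat.cast_zero, sub_zero, and_true]
    have : ∀ i : Fin g, ((i : ℕ) = 0) = (i = ⟨0, hg⟩) := by
      intro i; rw [eq_iff_iff, Fin.ext_iff]
    simp_rw [this, mul_ite, mul_one, mul_zero]
    rw [Finset.sum_ite_eq']
    simp
end

section
/- Let k be a field of characteristic zero, A = k[[t_1,…,t_n]], and suppose the g×g matrix (f_{jl}) over k[[t_1,…,t_n]] is invertible. Viewing each f_{jl} as an element of R[[t_1]] with R = k[[t_2,…,t_n]], there exist series φ_1,…,φ_g ∈ t_1·k[[t_1,…,t_n]] such that ∑_l f_{il}(φ_l, t_2,…,t_n)·(∂φ_l/∂t_1) = δ_{i1} as elements of k[[t_1,…,t_n]], where substitution replaces the variable t_1 by φ_l. -/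
open PowerSeries Finset

private lemma coeff_pow_agree {R : Type*} [CommRing R] {g g' : PowerSeries R} {n : ℕ}
    (h : ∀ q ≤ n, coeff q g = coeff q g') (M : ℕ) :
    ∀ j ≤ n, coeff j (g ^ M) = coeff j (g' ^ M) := by
  induction M with
  | zero => intro j _; rfl
  | succ M ih =>
    intro j hj
    rw [pow_succ, pow_succ, coeff_mul, coeff_mul]
    refine Finset.sum_congr rfl fun jp hjp => ?_
    rw [Finset.HasAntidiagonal.mem_antidiagonal] at hjp
    rw [ih jp.1 (by omega), h jp.2 (by omega)]

private lemma coeff_psComp {R : Type*} [CommRing R] (f g : PowerSeries R) (n : ℕ) :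
    coeff n (psComp f g) = ∑ M ∈ Finset.range (n + 1),
      coeff M f * coeff n (g ^ M) := coeff_mk _ _

private lemma coeff_psComp_agree {R : Type*} [CommRing R] (f : PowerSeries R)
    {g g' : PowerSeries R} {n : ℕ} (h : ∀ q ≤ n, coeff q g = coeff q g') :
    ∀ j ≤ n, coeff j (psComp f g) = coeff j (psComp f g') := by
  intro j hj
  rw [coeff_psComp, coeff_psComp]
  refine Finset.sum_congr rfl fun M _ => ?_
  rw [coeff_pow_agree (fun q hq => h q (hq.trans hj)) M j le_rfl]

private lemma coeff_zero_psComp_s7 {R : Type*} [CommRing R] (f g : PowerSeries R) :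
    coeff 0 (psComp f g) = coeff 0 f := by
  rw [coeff_psComp]
  simp

noncomputable def recSeq {α : Type*} [Zero α] (F : ℕ → (ℕ → α) → α) : ℕ → α
  | 0 => 0
  | n + 1 => F n (fun p => if _h : p ≤ n then recSeq F p else 0)
termination_by n => n
decreasing_by omega

lemma recSeq_zero {α : Type*} [Zero α] (F : ℕ → (ℕ → α) → α) : recSeq F 0 = 0 := by
  rw [recSeq]

lemma recSeq_succ {α : Type*} [Zero α] (F : ℕ → (ℕ → α) → α) (n : ℕ) :
    recSeq F (n + 1) = F n (fun p => if _h : p ≤ n then recSeq F p else 0) := by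
  rw [recSeq]

open PowerSeries in
/-- Over a field `k` of characteristic zero, identify `k[[t_1, …, t_n]]` (with `n = m + 1`)
with `R[[t_1]]` where `R = k[[t_2, …, t_n]]`.  If the `g × g` matrix `f` over
`k[[t_1, …, t_n]]` is invertible, then there exist `φ_1, …, φ_g ∈ t_1·k[[t_1, …, t_n]]`
such that `∑_l f_{il}(φ_l, t_2, …, t_n) · ∂φ_l/∂t_1 = δ_{i1}` in `k[[t_1, …, t_n]]`. -/
theorem stmt_7 {k : Type*} [Field k] [CharZero k] (m g : ℕ)
    (f : Matrix (Fin g) (Fin g) (PowerSeries (MvPowerSeries (Fin m) k)))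
    (hf : IsUnit f) :
    ∃ φ : Fin g → PowerSeries (MvPowerSeries (Fin m) k),
      (∀ l, PowerSeries.constantCoeff (φ l) = 0) ∧
      ∀ i, ∑ l, psComp (f i l) (φ l) * (φ l).derivativeFun
        = if (i : ℕ) = 0 then 1 else 0 := by
  classical
  set c : Matrix (Fin g) (Fin g) (MvPowerSeries (Fin m) k) :=
    (RingHom.mapMatrix (constantCoeff (R := MvPowerSeries (Fin m) k))) f with hc
  have hcu : IsUnit c := hf.map (RingHom.mapMatrix (constantCoeff (R := MvPowerSeries (Fin m) k)))
  obtain ⟨u, hu⟩ := hcu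
  set b : Matrix (Fin g) (Fin g) (MvPowerSeries (Fin m) k) := ↑u⁻¹ with hb
  have hcb : c * b = 1 := by rw [← hu, hb]; exact u.mul_inv
  have hnat : ∀ n : ℕ, IsUnit ((n + 1 : ℕ) : (MvPowerSeries (Fin m) k)) := by
    intro n
    rw [MvPowerSeries.isUnit_iff_constantCoeff]
    have hcast : (MvPowerSeries.constantCoeff (σ := Fin m) (R := k))
        ((n + 1 : ℕ) : MvPowerSeries (Fin m) k) = ((n + 1 : ℕ) : k) := map_natCast _ _
    rw [hcast]
    exact isUnit_iff_ne_zero.2 (by exact_mod_cast Nat.succ_ne_zero n)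
  set E : ℕ → (ℕ → Fin g → (MvPowerSeries (Fin m) k)) → Fin g → (MvPowerSeries (Fin m) k) := fun n bb i =>
    ∑ l, ∑ jp ∈ Finset.HasAntidiagonal.antidiagonal n,
      coeff jp.1 (psComp (f i l) (PowerSeries.mk fun q => bb q l)) *
        (bb (jp.2 + 1) l * ((jp.2 : (MvPowerSeries (Fin m) k)) + 1)) with hE
  set F : ℕ → (ℕ → Fin g → (MvPowerSeries (Fin m) k)) → Fin g → (MvPowerSeries (Fin m) k) := fun n bb =>
    Ring.inverse ((n + 1 : ℕ) : (MvPowerSeries (Fin m) k)) •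
      b.mulVec (fun i =>
        (if n = 0 ∧ (i : ℕ) = 0 then 1 else 0) - E n bb i) with hF
  set a : ℕ → Fin g → (MvPowerSeries (Fin m) k) := recSeq F with ha
  set φ : Fin g → PowerSeries (MvPowerSeries (Fin m) k) := fun l => PowerSeries.mk fun p => a p l with hφ
  refine ⟨φ, ?_, ?_⟩
  · intro l
    rw [← coeff_zero_eq_constantCoeff_apply, hφ]
    simp only [coeff_mk]
    rw [ha, recSeq_zero]
    rfl
  · intro i
    refine PowerSeries.ext fun n => ?_
    -- right hand side coefficient
    have hrhs : coeff n (if (i : ℕ) = 0 then (1 : PowerSeries (MvPowerSeries (Fin m) k)) else 0)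
        = if n = 0 ∧ (i : ℕ) = 0 then 1 else 0 := by
      by_cases hi : (i : ℕ) = 0 <;> by_cases hn : n = 0 <;>
        simp [hi, hn, coeff_one]
    rw [hrhs, map_sum]
    -- the truncated coefficient family
    set bn : ℕ → Fin g → (MvPowerSeries (Fin m) k) := fun p => if _h : p ≤ n then a p else 0 with hbn
    have han1 : a (n + 1) = F n bn := by rw [ha]; exact recSeq_succ F n
    have hbn_eq : ∀ p, p ≤ n → bn p = a p := by
      intro p hp; rw [hbn]; simp [hp]
    -- agreement of psComp coefficients
    have hagree : ∀ l : Fin g, ∀ j ≤ n,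
        coeff j (psComp (f i l) (φ l))
          = coeff j (psComp (f i l) (PowerSeries.mk fun q => bn q l)) := by
      intro l j hj
      refine coeff_psComp_agree (f i l) (fun q hq => ?_) j hj
      rw [hφ]
      simp only [coeff_mk]
      rw [hbn_eq q hq]
    -- expand the left hand side coefficient
    have hterm : ∀ l : Fin g,
        coeff n (psComp (f i l) (φ l) * (φ l).derivativeFun)
          = ∑ jp ∈ Finset.HasAntidiagonal.antidiagonal n,
              coeff jp.1 (psComp (f i l) (φ l)) * (a (jp.2 + 1) l * ((jp.2 : (MvPowerSeries (Fin m) k)) + 1)) := by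
      intro l
      rw [coeff_mul]
      refine Finset.sum_congr rfl fun jp _ => ?_
      rw [show (φ l).derivativeFun = derivative _ (φ l) from rfl, coeff_derivative]
      rw [hφ]
      simp only [coeff_mk]
    have hmem : ((0 : ℕ), n) ∈ Finset.HasAntidiagonal.antidiagonal n := by
      simp
    -- split off the (0, n) term
    have hsplit : ∀ l : Fin g,
        ∑ jp ∈ Finset.HasAntidiagonal.antidiagonal n,
            coeff jp.1 (psComp (f i l) (φ l)) * (a (jp.2 + 1) l * ((jp.2 : (MvPowerSeries (Fin m) k)) + 1))
          = coeff 0 (psComp (f i l) (φ l)) * (a (n + 1) l * ((n : (MvPowerSeries (Fin m) k)) + 1))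
            + ∑ jp ∈ (Finset.HasAntidiagonal.antidiagonal n).erase (0, n),
                coeff jp.1 (psComp (f i l) (φ l)) * (a (jp.2 + 1) l * ((jp.2 : (MvPowerSeries (Fin m) k)) + 1)) := by
      intro l
      rw [← Finset.add_sum_erase _ _ hmem]
    -- the erased sum equals E n bn i
    have hEeq : E n bn i
        = ∑ l, ∑ jp ∈ (Finset.HasAntidiagonal.antidiagonal n).erase (0, n),
            coeff jp.1 (psComp (f i l) (φ l)) * (a (jp.2 + 1) l * ((jp.2 : (MvPowerSeries (Fin m) k)) + 1)) := by
      rw [hE]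
      refine Finset.sum_congr rfl fun l _ => ?_
      rw [← Finset.add_sum_erase _ _ hmem]
      have hz : bn (n + 1) l = 0 := by
        rw [hbn]; simp
      rw [hz]
      rw [zero_mul, mul_zero, zero_add]
      refine Finset.sum_congr rfl fun jp hjp => ?_
      rw [Finset.mem_erase, Finset.HasAntidiagonal.mem_antidiagonal] at hjp
      have h1 : jp.1 ≤ n ∧ jp.2 + 1 ≤ n := by
        rcases hjp with ⟨hne, hsum⟩
        constructor
        · omega
        · rcases Nat.eq_zero_or_pos jp.1 with h0 | h0
          · exfalso; apply hne; ext <;> omega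
          · omega
      rw [hagree l jp.1 h1.1, hbn_eq (jp.2 + 1) h1.2]
    -- the main (0,n) contribution
    have hc0 : ∀ l : Fin g, coeff 0 (psComp (f i l) (φ l)) = c i l := by
      intro l
      rw [coeff_zero_psComp_s7, coeff_zero_eq_constantCoeff_apply, hc]
      rfl
    have hmain : ∑ l, coeff 0 (psComp (f i l) (φ l)) * (a (n + 1) l * ((n : (MvPowerSeries (Fin m) k)) + 1))
        = (if n = 0 ∧ (i : ℕ) = 0 then 1 else 0) - E n bn i := by
      have h1 : ∑ l, coeff 0 (psComp (f i l) (φ l)) * (a (n + 1) l * ((n : (MvPowerSeries (Fin m) k)) + 1))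
          = ((n + 1 : ℕ) : (MvPowerSeries (Fin m) k)) * (c.mulVec (a (n + 1)) i) := by
        rw [Matrix.mulVec, dotProduct, Finset.mul_sum]
        refine Finset.sum_congr rfl fun l _ => ?_
        rw [hc0 l]
        push_cast
        ring
      rw [h1, han1, hF]
      simp only
      rw [Matrix.mulVec_smul, Matrix.mulVec_mulVec, hcb, Matrix.one_mulVec]
      rw [Pi.smul_apply, smul_eq_mul, ← mul_assoc, Ring.mul_inverse_cancel _ (hnat n), one_mul]
    calc ∑ l, coeff n (psComp (f i l) (φ l) * (φ l).derivativeFun)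
        = ∑ l, (coeff 0 (psComp (f i l) (φ l)) * (a (n + 1) l * ((n : (MvPowerSeries (Fin m) k)) + 1))
            + ∑ jp ∈ (Finset.HasAntidiagonal.antidiagonal n).erase (0, n),
                coeff jp.1 (psComp (f i l) (φ l)) * (a (jp.2 + 1) l * ((jp.2 : (MvPowerSeries (Fin m) k)) + 1))) := by
          refine Finset.sum_congr rfl fun l _ => ?_
          rw [hterm l, hsplit l]
      _ = (if n = 0 ∧ (i : ℕ) = 0 then 1 else 0) := by
          rw [Finset.sum_add_distrib, hmain, ← hEeq]
          ring
end
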